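/- Let f : X → X be an asynchronous 2-cyclic contraction with constant c ∈ [0,1) with respect to X = X_1 ∪ ... ∪ X_m. If x₀ ∈ X_1 and y₀ ∈ X_2, and x_n = f^n(x₀), y_n = f^n(y₀), then for all n ≥ 0: d(x_n, y_n) ≤ c^n·d(x₀, y₀) and d(y_n, x_{n+1}) ≤ c^n·d(y₀, x₁); consequently d(x_n, x_{n+1}) ≤ c^n·(d(x₀, y₀) + d(y₀, x₁)) for all n ≥ 1, and (x_n) is a Cauchy sequence. -/

import Mathlib

theorem asynchronous_two_cyclic_orbit_estimates {α : Type*} [MetricSpace α]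
    (m : ℕ) (hm : 3 ≤ m)
    (X : ZMod m → Set α) (hne : ∀ i, (X i).Nonempty)
    (hcov : (⋃ i, X i) = Set.univ) (f : α → α)
    (hcyc : ∀ i, ∀ x ∈ X i, f x ∈ X (i + 2))
    (c : ℝ) (hc0 : 0 ≤ c) (hc1 : c < 1)
    (hcontr : ∀ i, ∀ x ∈ X i, ∀ y ∈ X (i + 1), dist (f x) (f y) ≤ c * dist x y)
    (x₀ y₀ : α) (hx₀ : x₀ ∈ X 1) (hy₀ : y₀ ∈ X 2) :
    (∀ n : ℕ, dist (f^[n] x₀) (f^[n] y₀) ≤ c ^ n * dist x₀ y₀) ∧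
    (∀ n : ℕ, dist (f^[n] y₀) (f^[n + 1] x₀) ≤ c ^ n * dist y₀ (f x₀)) ∧
    (∀ n : ℕ, 1 ≤ n →
      dist (f^[n] x₀) (f^[n + 1] x₀) ≤ c ^ n * (dist x₀ y₀ + dist y₀ (f x₀))) ∧
    CauchySeq (fun n => f^[n] x₀) := by
  have hx : ∀ n : ℕ, f^[n] x₀ ∈ X (1 + 2 * n) := by
    intro n
    induction n with
    | zero => simpa using hx₀
    | succ n ih =>
      have := hcyc _ _ ih
      rw [Function.iterate_succ_apply']
      convert this using 2
      push_cast
      ring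
  have hy : ∀ n : ℕ, f^[n] y₀ ∈ X (1 + 2 * n + 1) := by
    intro n
    induction n with
    | zero =>
      convert hy₀ using 2
      norm_num
      rfl
    | succ n ih =>
      have := hcyc _ _ ih
      rw [Function.iterate_succ_apply']
      convert this using 2
      push_cast
      ring
  have h1 : ∀ n : ℕ, dist (f^[n] x₀) (f^[n] y₀) ≤ c ^ n * dist x₀ y₀ := by
    intro n
    induction n with
    | zero => simp
    | succ n ih =>
      rw [Function.iterate_succ_apply', Function.iterate_succ_apply']
      calc dist (f (f^[n] x₀)) (f (f^[n] y₀)) ≤ c * dist (f^[n] x₀) (f^[n] y₀) :=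
            hcontr _ _ (hx n) _ (hy n)
        _ ≤ c * (c ^ n * dist x₀ y₀) := by
            exact mul_le_mul_of_nonneg_left ih hc0
        _ = c ^ (n + 1) * dist x₀ y₀ := by ring
  have h2 : ∀ n : ℕ, dist (f^[n] y₀) (f^[n + 1] x₀) ≤ c ^ n * dist y₀ (f x₀) := by
    intro n
    induction n with
    | zero => simp
    | succ n ih =>
      rw [Function.iterate_succ_apply' f n y₀,
        Function.iterate_succ_apply' f (n+1) x₀]
      have hx' : f^[n + 1] x₀ ∈ X (1 + 2 * n + 1 + 1) := by
        have := hx (n + 1)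
        convert this using 2
        push_cast; ring
      calc dist (f (f^[n] y₀)) (f (f^[n+1] x₀)) ≤ c * dist (f^[n] y₀) (f^[n+1] x₀) :=
            hcontr _ _ (hy n) _ hx'
        _ ≤ c * (c ^ n * dist y₀ (f x₀)) := mul_le_mul_of_nonneg_left ih hc0
        _ = c ^ (n + 1) * dist y₀ (f x₀) := by ring
  have h3 : ∀ n : ℕ, dist (f^[n] x₀) (f^[n + 1] x₀) ≤
      c ^ n * (dist x₀ y₀ + dist y₀ (f x₀)) := by
    intro n
    calc dist (f^[n] x₀) (f^[n + 1] x₀)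
        ≤ dist (f^[n] x₀) (f^[n] y₀) + dist (f^[n] y₀) (f^[n + 1] x₀) := dist_triangle _ _ _
      _ ≤ c ^ n * dist x₀ y₀ + c ^ n * dist y₀ (f x₀) := add_le_add (h1 n) (h2 n)
      _ = c ^ n * (dist x₀ y₀ + dist y₀ (f x₀)) := by ring
  refine ⟨h1, h2, fun n _ => h3 n, ?_⟩
  apply cauchySeq_of_le_geometric c (dist x₀ y₀ + dist y₀ (f x₀)) hc1
  intro n
  calc dist (f^[n] x₀) (f^[n + 1] x₀) ≤ c ^ n * (dist x₀ y₀ + dist y₀ (f x₀)) := h3 n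
    _ = (dist x₀ y₀ + dist y₀ (f x₀)) * c ^ n := by ring
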